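/- Let f : ℝⁿ → ℝᵐ be continuous and let α > 0. If f is α-covering at each point x ∈ ℝⁿ (with the same constant α), then f is globally α-covering: B̄(f(x), αr) ⊆ f(B̄(x, r)) for every x ∈ ℝⁿ and every r ≥ 0. -/
import Mathlib


open Metric Set
open scoped ENNReal NNReal

noncomputable section

variable {E F : Type*} [NormedAddCommGroup E] [NormedAddCommGroup F]

/-- `f` is `α`-covering at `x`: for every `ε > 0` there is `r ∈ (0, ε]` with
`B̄(f x, α r) ⊆ f (B̄(x, r))`. -/
def AlphaCoveringAt (f : E → F) (x : E) (α : ℝ) : Prop :=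
  ∀ ε > (0:ℝ), ∃ r : ℝ, 0 < r ∧ r ≤ ε ∧
    closedBall (f x) (α * r) ⊆ f '' closedBall x r

/-- The covering bound `cov(f, x)`: supremum of all `α > 0` for which `f` is
`α`-covering at `x`. -/
def covBound (f : E → F) (x : E) : ℝ≥0∞ :=
  ⨆ (α : ℝ≥0) (_ : 0 < α ∧ AlphaCoveringAt f x (α : ℝ)), (α : ℝ≥0∞)

/-- `f` is linearly open around `xb` with constant `α`. -/
def LinOpenWith (f : E → F) (xb : E) (α : ℝ) : Prop :=
  ∃ U ∈ nhds xb, ∃ V ∈ nhds (f xb), ∀ x ∈ U, ∀ r > (0:ℝ),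
    ball (f x) (α * r) ∩ V ⊆ f '' ball x r

/-- The exact linear openness bound `lop(f, xb)` (`0` if no constant works). -/
def lopBound (f : E → F) (xb : E) : ℝ≥0∞ :=
  ⨆ (α : ℝ≥0) (_ : 0 < α ∧ LinOpenWith f xb (α : ℝ)), (α : ℝ≥0∞)

/-- `ℓ` is a Lipschitz constant of `h` on some neighbourhood of `xb`. -/
def IsLipConstAround (h : E → F) (xb : E) (ℓ : ℝ) : Prop :=
  ∃ U ∈ nhds xb, ∀ x₁ ∈ U, ∀ x₂ ∈ U, ‖h x₁ - h x₂‖ ≤ ℓ * ‖x₁ - x₂‖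

/-- `lip(h, xb)`: infimum of all `ℓ > 0` which are Lipschitz constants of `h`
on some neighbourhood of `xb` (`∞` if `h` is not locally Lipschitz at `xb`). -/
def lipBound (h : E → F) (xb : E) : ℝ≥0∞ :=
  ⨅ (ℓ : ℝ≥0) (_ : 0 < ℓ ∧ IsLipConstAround h xb (ℓ : ℝ)), (ℓ : ℝ≥0∞)

/-- `β` is a metric injectivity constant for `g` on some closed ball around `xb`. -/
def IsInjConstAround (g : E → F) (xb : E) (β : ℝ) : Prop :=
  ∃ δ > (0:ℝ), ∀ x₁ ∈ closedBall xb δ, ∀ x₂ ∈ closedBall xb δ,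
    β * ‖x₁ - x₂‖ ≤ ‖g x₁ - g x₂‖

/-- `g` is metrically injective around `xb`. -/
def MetricallyInjectiveAround (g : E → F) (xb : E) : Prop :=
  ∃ β > (0:ℝ), IsInjConstAround g xb β

/-- The metric injection bound `inj(g, xb)`: supremum of all valid `β > 0`. -/
def injBound (g : E → F) (xb : E) : ℝ≥0∞ :=
  ⨆ (β : ℝ≥0) (_ : 0 < β ∧ IsInjConstAround g xb (β : ℝ)), (β : ℝ≥0∞)

/-- `h` is a strict `μ`-estimator of `f` at `xb`: `h xb = f xb` and
`lip(f - h, xb) ≤ μ`. -/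
def IsStrictEstimator (f h : E → F) (xb : E) (μ : ℝ≥0) : Prop :=
  h xb = f xb ∧ lipBound (fun x => f x - h x) xb ≤ (μ : ℝ≥0∞)

/-- `g` is strongly (metrically) regular around `xb`: it is linearly open around
`xb` and the set-valued inverse `g⁻¹` has a single-valued graphical localization
around `(g xb, xb)`. -/
def StronglyRegularAround (g : E → F) (xb : E) : Prop :=
  (∃ α > (0:ℝ), LinOpenWith g xb α) ∧
  ∃ V ∈ nhds (g xb), ∃ U ∈ nhds xb, ∀ y ∈ V, ∃ x : E, g ⁻¹' {y} ∩ U = {x}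

/-- A continuous map which is `α`-covering at every point of `ℝⁿ` (with the
same `α > 0`) is globally `α`-covering: `B̄(f x, αr) ⊆ f(B̄(x, r))` for every
`x` and every `r ≥ 0`. -/
theorem stmt15 (n m : ℕ)
    (f : EuclideanSpace ℝ (Fin n) → EuclideanSpace ℝ (Fin m))
    (α : ℝ) (hα : 0 < α)
    (hcont : Continuous f)
    (hcov : ∀ x : EuclideanSpace ℝ (Fin n), AlphaCoveringAt f x α) :
    ∀ x : EuclideanSpace ℝ (Fin n), ∀ r : ℝ, 0 ≤ r →
      closedBall (f x) (α * r) ⊆ f '' closedBall x r := by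
  intro x r hr y hy
  rw [mem_closedBall, dist_eq_norm] at hy
  set A : Set (EuclideanSpace ℝ (Fin n)) :=
    {z | ‖z - x‖ ≤ r ∧ ‖f z - y‖ ≤ α * (r - ‖z - x‖)} with hA
  have hAx : x ∈ A := by
    refine ⟨by simp [hr], ?_⟩
    simpa [norm_sub_rev] using hy
  have hAclosed : IsClosed A := by
    have h1 : IsClosed {z : EuclideanSpace ℝ (Fin n) | ‖z - x‖ ≤ r} :=
      isClosed_le (by fun_prop) continuous_const
    have h2 : IsClosed {z : EuclideanSpace ℝ (Fin n) |
        ‖f z - y‖ ≤ α * (r - ‖z - x‖)} :=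
      isClosed_le (by fun_prop) (by fun_prop)
    exact h1.inter h2
  have hAcompact : IsCompact A := by
    have : A ⊆ closedBall x r := fun z hz => by
      simpa [mem_closedBall, dist_eq_norm] using hz.1
    exact (isCompact_closedBall x r).of_isClosed_subset hAclosed this
  obtain ⟨z₀, hz₀A, hmin⟩ := hAcompact.exists_isMinOn ⟨x, hAx⟩
    (Continuous.continuousOn (by fun_prop : Continuous fun z => ‖f z - y‖))
  by_cases hd : f z₀ = y
  · exact ⟨z₀, by simpa [mem_closedBall, dist_eq_norm] using hz₀A.1, hd⟩
  exfalso
  set d := ‖f z₀ - y‖ with hdd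
  have hd0 : 0 < d := by
    simpa [hdd, sub_eq_zero] using hd
  have hz₀r : ‖z₀ - x‖ < r := by
    nlinarith [hz₀A.2, hz₀A.1]
  have hεpos : 0 < min (d / α) (r - ‖z₀ - x‖) := by
    have : 0 < d / α := div_pos hd0 hα
    simp [lt_min_iff, this, sub_pos.2 hz₀r]
  obtain ⟨r', hr'0, hr'le, hcov'⟩ := hcov z₀ _ hεpos
  have hr'd : α * r' ≤ d := by
    have := hr'le.trans (min_le_left _ _)
    calc α * r' ≤ α * (d / α) := by nlinarith
    _ = d := by field_simp
  have hr'r : r' ≤ r - ‖z₀ - x‖ := hr'le.trans (min_le_right _ _)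
  set y' := f z₀ + (α * r' / d) • (y - f z₀) with hy'
  have hy'mem : y' ∈ closedBall (f z₀) (α * r') := by
    rw [mem_closedBall, dist_eq_norm]
    have : y' - f z₀ = (α * r' / d) • (y - f z₀) := by
      simp [hy']
    rw [this, norm_smul]
    have h1 : ‖y - f z₀‖ = d := by rw [hdd, norm_sub_rev]
    rw [h1, Real.norm_eq_abs, abs_of_nonneg (by positivity)]
    rw [div_mul_eq_mul_div, mul_div_assoc, div_self hd0.ne']
    simp
  obtain ⟨z₁, hz₁, hfz₁⟩ := hcov' hy'mem
  rw [mem_closedBall, dist_eq_norm] at hz₁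
  have hfz₁y : ‖f z₁ - y‖ = d - α * r' := by
    rw [hfz₁]
    have : y' - y = (1 - α * r' / d) • (f z₀ - y) := by
      rw [hy', sub_smul, smul_sub, one_smul]
      module
    rw [this, norm_smul, ← hdd, Real.norm_eq_abs,
      abs_of_nonneg (by rw [sub_nonneg]; exact div_le_one_of_le₀ hr'd hd0.le)]
    field_simp
  have hz₁x : ‖z₁ - x‖ ≤ ‖z₀ - x‖ + r' := by
    calc ‖z₁ - x‖ = ‖(z₁ - z₀) + (z₀ - x)‖ := by abel_nf
    _ ≤ ‖z₁ - z₀‖ + ‖z₀ - x‖ := norm_add_le _ _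
    _ ≤ ‖z₀ - x‖ + r' := by linarith
  have hz₁A : z₁ ∈ A := by
    refine ⟨by linarith, ?_⟩
    rw [hfz₁y]
    have h2 := hz₀A.2
    nlinarith
  have h3 : d ≤ ‖f z₁ - y‖ := hmin hz₁A
  rw [hfz₁y] at h3
  nlinarith
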